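/- Uniqueness of the connecting projective reflection for frames: let x ≠ x_i be points of ℝP^3 and let T = (t¹,t²,t³), T_i = (t¹_i,t²_i,t³_i) be triples of lines with t^j ∋ x, t^j_i ∋ x_i, such that t^j and t^j_i intersect in a point p^j ∉ {x, x_i} for each j, and the three points p¹, p², p³ span a plane π not containing x or x_i. Then there is exactly one projective reflection f induced by a point o and the plane π (o ∉ π) with f(x) = x_i and f(t^j) = t^j_i for j = 1,2,3; its center o is the unique point on the line x ∨ x_i with cr(x, q, x_i, o) = −1, where q = π ∩ (x ∨ x_i). -/

import Mathlib

/-!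
STATEMENT 13: uniqueness of the projective reflection connecting two frames.
Given distinct points `x`, `xᵢ` of `ℝP³` and triples of lines `t^j ∋ x`,
`t^j_i ∋ xᵢ` intersecting in points `p^j ∉ {x, xᵢ}` that span a plane `π` not
containing `x` or `xᵢ`, there is exactly one projective reflection induced by a
point `o` and the plane `π` mapping `x ↦ xᵢ` and `t^j ↦ t^j_i`; its center `o`
is the unique point on the line `x ∨ xᵢ` with `cr(x, q, xᵢ, o) = -1`, where
`q = π ⊓ (x ∨ xᵢ)`.

`ℝP³` is modelled by linear subspaces of `ℝ⁴`: points = rank 1, lines = rank 2,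
planes = rank 3.  The projective reflection with center `[w]` and hyperplane
`π` (with `ℝ⁴ = π ⊕ ℝw`) is induced by the linear involution fixing `π` and
negating `w`, i.e. `2·projπ - id`.  The cross-ratio condition
`cr(X, P, Y, Q) = -1` is encoded by `Harmonic`.
-/

open Submodule

abbrev V4 := Fin 4 → ℝ

def IsPoint (P : Submodule ℝ V4) : Prop := Module.finrank ℝ P = 1
def IsLine (L : Submodule ℝ V4) : Prop := Module.finrank ℝ L = 2

/-- The linear map inducing the projective reflection with hyperplane `π` and
center `[w]`: it fixes `π` pointwise and negates the `w`-component. -/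
noncomputable def reflMap (π : Submodule ℝ V4) (w : V4)
    (h : IsCompl π (span ℝ {w})) : V4 →ₗ[ℝ] V4 :=
  (2 : ℝ) • (π.subtype ∘ₗ Submodule.linearProjOfIsCompl π (span ℝ {w}) h) -
    LinearMap.id

/-- `Harmonic X P Y Q` encodes the cross-ratio condition `cr(X, P, Y, Q) = -1`
for four collinear points. -/
def Harmonic (X P Y Q : Submodule ℝ V4) : Prop :=
  ∃ u v : V4, u ≠ 0 ∧ v ≠ 0 ∧ P = span ℝ {u} ∧ Q = span ℝ {v} ∧
    X = span ℝ {u + v} ∧ Y = span ℝ {u - v}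

/-- The point `o` is a center of a projective reflection with plane `π`
mapping `x ↦ xi` and `t j ↦ ti j` for all `j`. -/
def IsReflCenter (π : Submodule ℝ V4) (x xi : Submodule ℝ V4)
    (t ti : Fin 3 → Submodule ℝ V4) (o : Submodule ℝ V4) : Prop :=
  IsPoint o ∧ ¬ o ≤ π ∧
    ∃ w : V4, w ≠ 0 ∧ o = span ℝ {w} ∧
      ∃ h : IsCompl π (span ℝ {w}),
        Submodule.map (reflMap π w h) x = xi ∧
        ∀ j : Fin 3, Submodule.map (reflMap π w h) (t j) = ti j

section Helpers

open Submodule Module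

lemma point_eq_span {P : Submodule ℝ V4} (hP : IsPoint P) {v : V4}
    (hv : v ≠ 0) (hvP : v ∈ P) : P = span ℝ {v} := by
  refine (Submodule.eq_of_le_of_finrank_le ((span_singleton_le_iff_mem v P).mpr hvP) ?_).symm
  rw [hP, finrank_span_singleton hv]

lemma point_exists_rep {P : Submodule ℝ V4} (hP : IsPoint P) :
    ∃ v : V4, v ≠ 0 ∧ P = span ℝ {v} := by
  have hbot : P ≠ ⊥ := by
    intro h
    rw [h] at hP
    simp [IsPoint] at hP
  obtain ⟨v, hvP, hv⟩ := Submodule.exists_mem_ne_zero_of_ne_bot hbot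
  exact ⟨v, hv, point_eq_span hP hv hvP⟩

lemma finrank_sup_points {P Q : Submodule ℝ V4} (hP : IsPoint P) (hQ : IsPoint Q)
    (hne : P ≠ Q) : Module.finrank ℝ ↥(P ⊔ Q) = 2 := by
  have hinf : P ⊓ Q = ⊥ := by
    by_contra h
    obtain ⟨v, hvPQ, hv⟩ := Submodule.exists_mem_ne_zero_of_ne_bot h
    exact hne ((point_eq_span hP hv (mem_inf.mp hvPQ).1).trans
      (point_eq_span hQ hv (mem_inf.mp hvPQ).2).symm)
  have h := Submodule.finrank_sup_add_finrank_inf_eq P Q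
  rw [hinf, finrank_bot, hP, hQ] at h
  omega

lemma line_eq_sup {L P Q : Submodule ℝ V4} (hL : IsLine L) (hP : IsPoint P)
    (hQ : IsPoint Q) (hne : P ≠ Q) (hPL : P ≤ L) (hQL : Q ≤ L) : L = P ⊔ Q := by
  refine (Submodule.eq_of_le_of_finrank_le (sup_le hPL hQL) ?_).symm
  rw [hL, finrank_sup_points hP hQ hne]

lemma isCompl_hyperplane {π : Submodule ℝ V4} (hπ : Module.finrank ℝ π = 3)
    {w : V4} (hw : w ∉ π) : IsCompl π (span ℝ {w}) := by
  have hw0 : w ≠ 0 := fun h => hw (h ▸ π.zero_mem)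
  have hdisj : π ⊓ span ℝ {w} = ⊥ := by
    rw [eq_bot_iff]
    intro v hv
    obtain ⟨c, rfl⟩ := mem_span_singleton.mp (mem_inf.mp hv).2
    rcases eq_or_ne c 0 with rfl | hc
    · simp
    · exact absurd ((π.smul_mem_iff hc).mp (mem_inf.mp hv).1) hw
  have h4 : Module.finrank ℝ V4 = 4 := Module.finrank_fin_fun ℝ
  have hsup : π ⊔ span ℝ {w} = ⊤ := by
    apply Submodule.eq_top_of_finrank_eq
    have h := Submodule.finrank_sup_add_finrank_inf_eq π (span ℝ {w})
    rw [hdisj, finrank_bot, finrank_span_singleton hw0, hπ] at h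
    rw [h4]
    omega
  exact ⟨disjoint_iff.mpr hdisj, codisjoint_iff.mpr hsup⟩

lemma reflMap_apply_left {π : Submodule ℝ V4} {w : V4} (h : IsCompl π (span ℝ {w}))
    {p : V4} (hp : p ∈ π) : reflMap π w h p = p := by
  have hproj : (Submodule.linearProjOfIsCompl π (span ℝ {w}) h) p = ⟨p, hp⟩ :=
    Submodule.linearProjOfIsCompl_apply_left h ⟨p, hp⟩
  simp only [reflMap, LinearMap.sub_apply, LinearMap.smul_apply, LinearMap.comp_apply,
    LinearMap.id_apply, hproj, Submodule.subtype_apply]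
  module

lemma reflMap_apply_w {π : Submodule ℝ V4} {w : V4} (h : IsCompl π (span ℝ {w})) :
    reflMap π w h w = -w := by
  have hproj : (Submodule.linearProjOfIsCompl π (span ℝ {w}) h) w = 0 :=
    Submodule.linearProjOfIsCompl_apply_right' h (mem_span_singleton_self w)
  simp only [reflMap, LinearMap.sub_apply, LinearMap.smul_apply, LinearMap.comp_apply,
    LinearMap.id_apply, hproj, map_zero]
  module

lemma map_span_singleton (f : V4 →ₗ[ℝ] V4) (v : V4) :
    Submodule.map f (span ℝ {v}) = span ℝ {f v} := by
  rw [Submodule.map_span, Set.image_singleton]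

lemma map_reflMap_of_le {π : Submodule ℝ V4} {w : V4} (h : IsCompl π (span ℝ {w}))
    {P : Submodule ℝ V4} (hP : P ≤ π) :
    Submodule.map (reflMap π w h) P = P := by
  apply le_antisymm
  · rintro _ ⟨p, hp, rfl⟩
    rwa [reflMap_apply_left h (hP hp)]
  · intro p hp
    exact ⟨p, hp, reflMap_apply_left h (hP hp)⟩

lemma span_singleton_neg' (v : V4) : span ℝ {-v} = span ℝ {v} := by
  rw [show -v = (-1 : ℝ) • v by module]
  exact Submodule.span_singleton_smul_eq (isUnit_iff_ne_zero.mpr (by norm_num)) v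

end Helpers

theorem unique_connecting_projective_reflection
    (x xi : Submodule ℝ V4) (hx : IsPoint x) (hxi : IsPoint xi) (hne : x ≠ xi)
    (t ti : Fin 3 → Submodule ℝ V4)
    (ht : ∀ j, IsLine (t j)) (hti : ∀ j, IsLine (ti j))
    (hxt : ∀ j, x ≤ t j) (hxiti : ∀ j, xi ≤ ti j)
    (hmeet : ∀ j, IsPoint (t j ⊓ ti j))
    (hpx : ∀ j, t j ⊓ ti j ≠ x) (hpxi : ∀ j, t j ⊓ ti j ≠ xi)
    (π : Submodule ℝ V4)
    (hπ : π = (t 0 ⊓ ti 0) ⊔ (t 1 ⊓ ti 1) ⊔ (t 2 ⊓ ti 2))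
    (hπrank : Module.finrank ℝ π = 3)
    (hxπ : ¬ x ≤ π) (hxiπ : ¬ xi ≤ π) :
    (∃! o : Submodule ℝ V4, IsReflCenter π x xi t ti o) ∧
    ∀ o : Submodule ℝ V4, IsReflCenter π x xi t ti o →
      o ≤ x ⊔ xi ∧ Harmonic x ((x ⊔ xi) ⊓ π) xi o := by
  
  classical
  obtain ⟨a, ha0, hxa⟩ := point_exists_rep hx
  obtain ⟨b, hb0, hxib⟩ := point_exists_rep hxi
  have haπ : a ∉ π := fun h => hxπ (hxa ▸ (span_singleton_le_iff_mem a π).mpr h)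
  have hbπ : b ∉ π := fun h => hxiπ (hxib ▸ (span_singleton_le_iff_mem b π).mpr h)
  have hca : IsCompl π (span ℝ {a}) := isCompl_hyperplane hπrank haπ
  have hbtop : b ∈ π ⊔ span ℝ {a} := by
    rw [codisjoint_iff.mp hca.codisjoint]; trivial
  obtain ⟨p, hpπ, r, hr, hbpr⟩ := Submodule.mem_sup.mp hbtop
  obtain ⟨s, rfl⟩ := mem_span_singleton.mp hr
  have hs : s ≠ 0 := by
    rintro rfl
    rw [zero_smul, add_zero] at hbpr
    exact hbπ (hbpr ▸ hpπ)
  set b' : V4 := s⁻¹ • b with hb'def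
  have hb'0 : b' ≠ 0 := smul_ne_zero (inv_ne_zero hs) hb0
  have hxib' : xi = span ℝ {b'} := by
    rw [hxib, hb'def]
    exact (Submodule.span_singleton_smul_eq
      (isUnit_iff_ne_zero.mpr (inv_ne_zero hs)) b).symm
  set q' : V4 := b' - a with hq'def
  have hq'π : q' ∈ π := by
    have hq'eq : q' = s⁻¹ • p := by
      rw [hq'def, hb'def, ← hbpr]
      rw [smul_add, smul_smul, inv_mul_cancel₀ hs, one_smul]
      abel
    rw [hq'eq]
    exact π.smul_mem _ hpπ
  have hq'0 : q' ≠ 0 := by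
    intro h
    have hba : b' = a := by rwa [hq'def, sub_eq_zero] at h
    exact hne (by rw [hxa, hxib', hba])
  set w : V4 := a + b' with hwdef
  have hwπ : w ∉ π := by
    intro hwm
    apply haπ
    have h2a : (2 : ℝ) • a = w - q' := by rw [hwdef, hq'def]; module
    have h2aπ : (2 : ℝ) • a ∈ π := h2a ▸ sub_mem hwm hq'π
    exact (π.smul_mem_iff (two_ne_zero)).mp h2aπ
  have hw0 : w ≠ 0 := fun h => hwπ (h ▸ π.zero_mem)
  have hcw : IsCompl π (span ℝ {w}) := isCompl_hyperplane hπrank hwπ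
  have hfa : reflMap π w hcw a = -b' := by
    have ha2 : a = (2⁻¹ : ℝ) • w - (2⁻¹ : ℝ) • q' := by rw [hwdef, hq'def]; module
    rw [show reflMap π w hcw a = reflMap π w hcw ((2⁻¹ : ℝ) • w - (2⁻¹ : ℝ) • q') by
        rw [← ha2],
      map_sub, map_smul, map_smul, reflMap_apply_w hcw, reflMap_apply_left hcw hq'π,
      hwdef, hq'def]
    module
  have hmapx : Submodule.map (reflMap π w hcw) x = xi := by
    rw [hxa, map_span_singleton, hfa, span_singleton_neg', hxib']
  have hpj : ∀ j, (t j ⊓ ti j) ≤ π := by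
    intro j
    rw [hπ]
    fin_cases j
    · exact le_sup_of_le_left le_sup_left
    · exact le_sup_of_le_left le_sup_right
    · exact le_sup_right
  have hmapt : ∀ j, Submodule.map (reflMap π w hcw) (t j) = ti j := by
    intro j
    have htj : t j = x ⊔ (t j ⊓ ti j) :=
      line_eq_sup (ht j) hx (hmeet j) (Ne.symm (hpx j)) (hxt j) inf_le_left
    have htij : ti j = xi ⊔ (t j ⊓ ti j) :=
      line_eq_sup (hti j) hxi (hmeet j) (Ne.symm (hpxi j)) (hxiti j) inf_le_right
    rw [htj, Submodule.map_sup, hmapx, map_reflMap_of_le hcw (hpj j), ← htij]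
  have hcenter : IsReflCenter π x xi t ti (span ℝ {w}) :=
    ⟨finrank_span_singleton hw0,
     fun h => hwπ (h (mem_span_singleton_self w)),
     w, hw0, rfl, hcw, hmapx, hmapt⟩
  have huniq : ∀ o : Submodule ℝ V4, IsReflCenter π x xi t ti o → o = span ℝ {w} := by
    rintro o ⟨-, -, w₂, hw₂0, rfl, h₂, hmx₂, -⟩
    have hatop : a ∈ π ⊔ span ℝ {w₂} := by
      rw [codisjoint_iff.mp h₂.codisjoint]; trivial
    obtain ⟨p₂, hp₂π, r₂, hr₂, hapr⟩ := Submodule.mem_sup.mp hatop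
    obtain ⟨c, rfl⟩ := mem_span_singleton.mp hr₂
    have hc : c ≠ 0 := by
      rintro rfl
      rw [zero_smul, add_zero] at hapr
      exact haπ (hapr ▸ hp₂π)
    have hga : reflMap π w₂ h₂ a = p₂ - c • w₂ := by
      rw [show reflMap π w₂ h₂ a = reflMap π w₂ h₂ (p₂ + c • w₂) by rw [← hapr],
        map_add, map_smul, reflMap_apply_left h₂ hp₂π, reflMap_apply_w h₂]
      module
    have hgaxi : reflMap π w₂ h₂ a ∈ xi := by
      rw [← hmx₂]
      exact Submodule.mem_map_of_mem (hxa ▸ mem_span_singleton_self a)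
    obtain ⟨μ, hμ⟩ := mem_span_singleton.mp (hxib' ▸ hgaxi)
    have hsum : a + reflMap π w₂ h₂ a ∈ π := by
      rw [hga, ← hapr,
        show (p₂ + c • w₂) + (p₂ - c • w₂) = (2 : ℝ) • p₂ from by module]
      exact π.smul_mem _ hp₂π
    have hμa : (1 + μ) • a ∈ π := by
      have he : (1 + μ) • a = (a + reflMap π w₂ h₂ a) - μ • q' := by
        rw [← hμ, hq'def]; module
      rw [he]
      exact sub_mem hsum (π.smul_mem _ hq'π)
    have hμ1 : μ = -1 := by
      by_contra hμ1
      have h1μ : (1 + μ) ≠ 0 := fun h => hμ1 (by linear_combination h)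
      exact haπ ((π.smul_mem_iff h1μ).mp hμa)
    have hwc : w = (2 * c) • w₂ := by
      have h1 : a - reflMap π w₂ h₂ a = (2 * c) • w₂ := by
        rw [hga, ← hapr]; module
      have h2 : w = a - reflMap π w₂ h₂ a := by
        rw [hwdef, ← hμ, hμ1]; module
      rw [h2, h1]
    rw [hwc]
    exact (Submodule.span_singleton_smul_eq
      (isUnit_iff_ne_zero.mpr (mul_ne_zero two_ne_zero hc)) w₂).symm
  have hwmem : w ∈ x ⊔ xi := by
    rw [hwdef]
    exact add_mem (Submodule.mem_sup_left (hxa ▸ mem_span_singleton_self a))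
      (Submodule.mem_sup_right (hxib' ▸ mem_span_singleton_self b'))
  have hPeq : (x ⊔ xi) ⊓ π = span ℝ {q'} := by
    have hq'mem : q' ∈ (x ⊔ xi) ⊓ π := by
      refine mem_inf.mpr ⟨?_, hq'π⟩
      rw [hq'def]
      exact sub_mem (Submodule.mem_sup_right (hxib' ▸ mem_span_singleton_self b'))
        (Submodule.mem_sup_left (hxa ▸ mem_span_singleton_self a))
    have hsuptop : (x ⊔ xi) ⊔ π = ⊤ := by
      rw [eq_top_iff, ← codisjoint_iff.mp hca.codisjoint]
      refine sup_le le_sup_right (le_sup_of_le_left ?_)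
      rw [← hxa]
      exact le_sup_left
    have hinf1 : IsPoint ((x ⊔ xi) ⊓ π) := by
      have h := Submodule.finrank_sup_add_finrank_inf_eq (x ⊔ xi) π
      rw [hsuptop, finrank_top, Module.finrank_fin_fun,
        finrank_sup_points hx hxi hne, hπrank] at h
      unfold IsPoint
      omega
    exact point_eq_span hinf1 hq'0 hq'mem
  have hharm : ∀ o : Submodule ℝ V4, IsReflCenter π x xi t ti o →
      o ≤ x ⊔ xi ∧ Harmonic x ((x ⊔ xi) ⊓ π) xi o := by
    intro o ho
    rw [huniq o ho]
    constructor
    · exact (span_singleton_le_iff_mem w _).mpr hwmem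
    · refine ⟨q', -w, hq'0, neg_ne_zero.mpr hw0, hPeq, (span_singleton_neg' w).symm,
        ?_, ?_⟩
      · rw [show q' + -w = (-2 : ℝ) • a from by rw [hq'def, hwdef]; module, hxa]
        exact (Submodule.span_singleton_smul_eq
          (isUnit_iff_ne_zero.mpr (by norm_num)) a).symm
      · rw [show q' - -w = (2 : ℝ) • b' from by rw [hq'def, hwdef]; module, hxib']
        exact (Submodule.span_singleton_smul_eq
          (isUnit_iff_ne_zero.mpr two_ne_zero) b').symm
  exact ⟨⟨span ℝ {w}, hcenter, huniq⟩, hharm⟩
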